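/- Let G be a directed acyclic graph, Z a conditioning set, and w ∉ Z. Suppose a path p between vertices a and b is active with respect to Z ∪ {w} but not with respect to Z, so that w opens a collider c on p (w = c or w is a descendant of c). Then each of the two segments of p from c to its endpoints a and b is, together with the directed path from c down to w, reachable from w by a path that is active with respect to Z ∪ {w}; in particular, there are active paths with respect to Z ∪ {w} from w to a and from w to b. -/

import Mathlib

/-! Basic definitions for paths, colliders, activation (d-connection), and
(un)stability in a directed graph, following the paper's conventions.

* A directed graph on vertex type `V` is an edge relation `E : V → V → Prop`.
* A path is a list of distinct vertices consecutively joined by edges of the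
  graph traversed in either direction.
* A vertex `w` is a collider on a path if both path edges at `w` point into `w`.
* Given a conditioning set `Z`, a path is active w.r.t. `Z` if every collider on
  the path is in `Z` or has a descendant in `Z`, and every interior non-collider
  on the path is not in `Z`.
* A path is unstable (w.r.t. an optional selection vertex `S` and a set `U` of
  unobserved vertices) if it contains `S` or a vertex of `U`. -/

variable {V : Type*}

/-- A path: a list of distinct vertices, consecutive ones joined by an edge of
the graph traversed in either direction. -/
def IsUndirPath (E : V → V → Prop) (p : List V) : Prop :=
  p.Nodup ∧ p.Chain' (fun a b => E a b ∨ E b a)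

/-- `p` is a path between `a` and `b`. -/
def PathBetween (E : V → V → Prop) (a b : V) (p : List V) : Prop :=
  IsUndirPath E p ∧ p.head? = some a ∧ p.getLast? = some b

/-- `w` is a collider on the path `p`: both path edges at `w` point into `w`. -/
def IsColliderOn (E : V → V → Prop) (p : List V) (w : V) : Prop :=
  ∃ a b, [a, w, b] <:+: p ∧ E a w ∧ E b w

/-- A path `p` is active with respect to the conditioning set `Z`: every
collider on `p` is in `Z` or has a descendant in `Z`, and every (interior)
non-collider on `p` is not in `Z`. -/
def ActivePath (E : V → V → Prop) (Z : Set V) (p : List V) : Prop :=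
  (∀ w, IsColliderOn E p w → w ∈ Z ∨ ∃ d ∈ Z, Relation.TransGen E w d) ∧
  (∀ w ∈ p.tail.dropLast, ¬ IsColliderOn E p w → w ∉ Z)

/-- A path is unstable if it contains the selection vertex `S` or an unobserved
vertex of `U`. -/
def UnstablePath (S : Option V) (U : Set V) (p : List V) : Prop :=
  ∃ w ∈ p, w ∈ U ∨ S = some w

/-- The edge relation is acyclic (the graph is a DAG). -/
def AcyclicRel (E : V → V → Prop) : Prop :=
  ∀ v, ¬ Relation.TransGen E v v

/-- A conditioning set `Z` is stable: no member of `Z` has an active unstable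
path to the target `T` with respect to `Z`. -/
def StableSet (E : V → V → Prop) (S : Option V) (U : Set V) (T : V) (Z : Set V) : Prop :=
  ∀ x ∈ Z, ∀ p : List V, PathBetween E T x p → ActivePath E Z p → ¬ UnstablePath S U p


section AuxLemmas

open List Relation

variable {E : V → V → Prop}

private lemma cyc_absurd (hdag : AcyclicRel E) {x v : V} (h1 : E x v) (h2 : E v x) : False :=
  hdag v ((Relation.TransGen.single h2).tail h1)

private lemma nodup_of_chain' (hdag : AcyclicRel E) {l : List V} (h : l.Chain' E) :
    l.Nodup := by
  haveI : IsTrans V (Relation.TransGen E) := ⟨fun _ _ _ h1 h2 => h1.trans h2⟩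
  have h2 : l.Chain' (Relation.TransGen E) := h.imp fun a b hab => Relation.TransGen.single hab
  have h3 : l.Pairwise (Relation.TransGen E) := List.isChain_iff_pairwise.1 h2
  exact h3.imp fun {a b} hab => by rintro rfl; exact hdag a hab

private lemma exists_chain_of_transGen {c w : V} (h : Relation.TransGen E c w) :
    ∃ F : List V, (c :: F).Chain' E ∧ (c :: F).getLast? = some w ∧
      ∀ v ∈ F, Relation.TransGen E c v := by
  induction h using Relation.TransGen.head_induction_on with
  | single hcw => exact ⟨[w], by simpa [List.Chain'] using hcw, by simp, by simpa using Relation.TransGen.single hcw⟩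
  | head hac htg ih =>
    rename_i a c₁
    obtain ⟨F₁, hch, hlast, hmem⟩ := ih
    refine ⟨c₁ :: F₁, List.isChain_cons_cons.2 ⟨hac, hch⟩, by simpa using hlast, ?_⟩
    intro v hv
    rcases List.mem_cons.1 hv with rfl | hv
    · exact Relation.TransGen.single hac
    · exact (Relation.TransGen.single hac).trans (hmem v hv)

private lemma exists_rev_dirpath (hdag : AcyclicRel E) {c w : V}
    (h : c = w ∨ Relation.TransGen E c w) :
    ∃ R : List V, R.Chain' (fun x y => E y x) ∧ R.head? = some w ∧ R.getLast? = some c ∧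
      R.Nodup ∧ ∀ v ∈ R, v = c ∨ Relation.TransGen E c v := by
  rcases h with rfl | h
  · exact ⟨[c], by simp [List.Chain'], by simp, by simp, by simp, by simp⟩
  · obtain ⟨F, hch, hlast, hmem⟩ := exists_chain_of_transGen h
    refine ⟨(c :: F).reverse, ?_, ?_, ?_, ?_, ?_⟩
    · show List.IsChain _ _; rw [List.isChain_reverse]; exact hch
    · rw [List.head?_reverse]; exact hlast
    · rw [List.getLast?_reverse]; simp
    · rw [List.nodup_reverse]; exact nodup_of_chain' hdag hch
    · intro v hv
      rw [List.mem_reverse] at hv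
      rcases List.mem_cons.1 hv with rfl | hv
      · exact Or.inl rfl
      · exact Or.inr (hmem v hv)

private lemma triple_infix_unique {l : List V} (hnd : l.Nodup) {x v y x' y' : V}
    (h1 : [x, v, y] <:+: l) (h2 : [x', v, y'] <:+: l) : x = x' ∧ y = y' := by
  induction l with
  | nil =>
    exfalso
    obtain ⟨s, t, hs⟩ := h1
    simpa using congrArg List.length hs
  | cons h t ih =>
    have hnd' : t.Nodup := (List.nodup_cons.1 hnd).2
    rcases List.infix_cons_iff.1 h1 with hp1 | hi1 <;>
      rcases List.infix_cons_iff.1 h2 with hp2 | hi2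
    · have heq := (List.prefix_of_prefix_length_le hp1 hp2 (by simp)).eq_of_length (by simp)
      simp only [List.cons.injEq] at heq
      exact ⟨heq.1, heq.2.2.1⟩
    · exfalso
      rw [List.cons_prefix_cons] at hp1
      obtain ⟨r, hr⟩ := hp1.2
      have hvmem : v ∈ t := by rw [← hr]; simp
      subst hr
      have hvny : v ∉ y :: r := by
        have := List.nodup_cons.1 hnd'
        exact this.1
      rcases List.infix_cons_iff.1 hi2 with hp | hi
      · rw [List.cons_prefix_cons] at hp
        obtain ⟨rfl, hp⟩ := hp
        exact hvny (hp.subset (by simp))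
      · exact hvny (hi.subset (by simp))
    · exfalso
      rw [List.cons_prefix_cons] at hp2
      obtain ⟨r, hr⟩ := hp2.2
      subst hr
      have hvny : v ∉ y' :: r := by
        have := List.nodup_cons.1 hnd'
        exact this.1
      rcases List.infix_cons_iff.1 hi1 with hp | hi
      · rw [List.cons_prefix_cons] at hp
        obtain ⟨rfl, hp⟩ := hp
        exact hvny (hp.subset (by simp))
      · exact hvny (hi.subset (by simp))
    · exact ih hnd' hi1 hi2

private lemma not_collider_of_triple {p : List V} (hnd : p.Nodup) {x v y : V}
    (hinf : [x, v, y] <:+: p) (h : ¬ (E x v ∧ E y v)) : ¬ IsColliderOn E p v := by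
  rintro ⟨a, b, hab, ha, hb⟩
  obtain ⟨hx, hy⟩ := triple_infix_unique hnd hab hinf
  exact h ⟨hx ▸ ha, hy ▸ hb⟩

private lemma tail_dropLast_comm : ∀ (l : List V), l.tail.dropLast = l.dropLast.tail
  | [] => rfl
  | [_] => rfl
  | _ :: _ :: _ => by simp

private lemma mem_tail_dropLast_of_triple {l : List V} {x v y : V} (h : [x, v, y] <:+: l) :
    v ∈ l.tail.dropLast := by
  induction l with
  | nil =>
    exfalso
    obtain ⟨s, t, hs⟩ := h
    simpa using congrArg List.length hs
  | cons a t ih =>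
    rcases List.infix_cons_iff.1 h with hp | hi
    · obtain ⟨r, hr⟩ := hp
      simp only [List.cons_append, List.cons.injEq] at hr
      obtain ⟨rfl, hr⟩ := hr
      rw [List.tail_cons, ← hr]
      simp
    · have hv := ih hi
      rw [tail_dropLast_comm] at hv
      exact List.mem_of_mem_tail hv

private lemma exists_triple_of_mem_tail_dropLast :
    ∀ (l : List V) (v : V), v ∈ l.tail.dropLast → ∃ x y, [x, v, y] <:+: l
  | [], v, h => by simp at h
  | [a], v, h => by simp at h
  | [a, b], v, h => by simp at h
  | a :: b :: c :: t, v, h => by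
    rw [List.tail_cons, List.dropLast_cons_of_ne_nil (by simp)] at h
    rcases List.mem_cons.1 h with rfl | h
    · exact ⟨a, c, ⟨[], t, rfl⟩⟩
    · obtain ⟨x, y, hxy⟩ := exists_triple_of_mem_tail_dropLast (b :: c :: t) v (by simpa using h)
      exact ⟨x, y, hxy.trans ⟨[a], [], by simp⟩⟩

private lemma mem_tail_of_pair_infix {l : List V} {x v : V} (h : [x, v] <:+: l) :
    v ∈ l.tail := by
  obtain ⟨s, t, rfl⟩ := h
  cases s <;> simp

private lemma prefix_append_split {l A B : List V} (h : l <+: A ++ B) :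
    l <+: A ∨ ∃ l2, l = A ++ l2 ∧ l2 <+: B := by
  induction A generalizing l with
  | nil => exact Or.inr ⟨l, by simp, by simpa using h⟩
  | cons a A' ih =>
    cases l with
    | nil => exact Or.inl (List.nil_prefix)
    | cons x l' =>
      rw [List.cons_append, List.cons_prefix_cons] at h
      obtain ⟨rfl, h⟩ := h
      rcases ih h with h' | ⟨l2, rfl, h2⟩
      · exact Or.inl (List.cons_prefix_cons.2 ⟨rfl, h'⟩)
      · exact Or.inr ⟨l2, by simp, h2⟩

private lemma infix_append_split {l A B : List V} (h : l <:+: A ++ B) :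
    l <:+: A ∨ l <:+: B ∨
      ∃ l1 l2, l = l1 ++ l2 ∧ l1 ≠ [] ∧ l2 ≠ [] ∧ l1 <:+ A ∧ l2 <+: B := by
  induction A generalizing l with
  | nil => exact Or.inr (Or.inl (by simpa using h))
  | cons a A' ih =>
    rcases List.infix_cons_iff.1 h with hp | hi
    · rcases prefix_append_split (A := a :: A') hp with h' | ⟨l2, rfl, h2⟩
      · exact Or.inl h'.isInfix
      · rcases l2 with _ | ⟨z, l2'⟩
        · exact Or.inl (by simpa using List.infix_refl (a :: A'))
        · exact Or.inr (Or.inr ⟨a :: A', z :: l2', rfl, by simp, by simp,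
            List.suffix_refl _, h2⟩)
    · rcases ih hi with h' | h' | ⟨l1, l2, rfl, hne1, hne2, hsuf, hpre⟩
      · exact Or.inl (h'.trans (List.infix_cons (List.infix_refl A')))
      · exact Or.inr (Or.inl h')
      · exact Or.inr (Or.inr ⟨l1, l2, rfl, hne1, hne2, hsuf.trans (List.suffix_cons a A'), hpre⟩)

private lemma activePath_of_triples {W0 : Set V} {q : List V}
    (h1 : ∀ x v y, [x, v, y] <:+: q → E x v → E y v →
      v ∈ W0 ∨ ∃ d ∈ W0, Relation.TransGen E v d)
    (h2 : ∀ x v y, [x, v, y] <:+: q → ¬ (E x v ∧ E y v) → v ∉ W0) :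
    ActivePath E W0 q := by
  constructor
  · rintro v ⟨x, y, hinf, hx, hy⟩
    exact h1 x v y hinf hx hy
  · intro v hv hnc
    obtain ⟨x, y, hinf⟩ := exists_triple_of_mem_tail_dropLast _ _ hv
    refine h2 x v y hinf ?_
    rintro ⟨hx, hy⟩
    exact hnc ⟨x, y, hinf, hx, hy⟩

private lemma isColliderOn_reverse_of {p : List V} {v : V}
    (h : IsColliderOn E p v) : IsColliderOn E p.reverse v := by
  obtain ⟨x, y, hinf, hx, hy⟩ := h
  exact ⟨y, x, by simpa using hinf.reverse, hy, hx⟩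

private lemma activePath_reverse {W0 : Set V} {p : List V}
    (h : ActivePath E W0 p) : ActivePath E W0 p.reverse := by
  obtain ⟨h1, h2⟩ := h
  constructor
  · intro v hv
    have hv' : IsColliderOn E p v := by
      have := isColliderOn_reverse_of hv
      rwa [List.reverse_reverse] at this
    exact h1 v hv'
  · intro v hv hnc
    refine h2 v ?_ ?_
    · rw [List.tail_reverse, List.dropLast_reverse, List.mem_reverse] at hv
      rwa [tail_dropLast_comm]
    · intro hc
      exact hnc (isColliderOn_reverse_of hc)

private lemma pathBetween_reverse {x y : V} {p : List V}
    (h : PathBetween E x y p) : PathBetween E y x p.reverse := by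
  obtain ⟨⟨hnd, hch⟩, hh, hl⟩ := h
  refine ⟨⟨List.nodup_reverse.2 hnd, ?_⟩, ?_, ?_⟩
  · show List.IsChain _ _; rw [List.isChain_reverse]
    exact hch.imp fun a b hab => hab.symm
  · rw [List.head?_reverse]; exact hl
  · rw [List.getLast?_reverse]; exact hh

private lemma aux_branch {E : V → V → Prop} (hdag : AcyclicRel E)
    {Z : Set V} {w a b : V} (hw : w ∉ Z)
    {p : List V} (hp : PathBetween E a b p)
    (hact : ActivePath E (Z ∪ {w}) p) (hnact : ¬ ActivePath E Z p) :
    ∃ q : List V, PathBetween E w a q ∧ ActivePath E (Z ∪ {w}) q := by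
  classical
  obtain ⟨⟨hnd, hch⟩, hhead, hlast⟩ := hp
  obtain ⟨hcol, hncol⟩ := hact
  -- Step 1: find a collider `c` that is closed w.r.t. `Z` but opened by `w`.
  have hstep1 : ∃ c, IsColliderOn E p c ∧ c ∉ Z ∧ (∀ d ∈ Z, ¬ Relation.TransGen E c d) ∧
      (c = w ∨ Relation.TransGen E c w) := by
    by_contra hno
    push_neg at hno
    apply hnact
    constructor
    · intro v hv
      by_contra hvz
      push_neg at hvz
      obtain ⟨hvz1, hvz2⟩ := hvz
      have hbad := hno v hv hvz1 (fun d hd ht => hvz2 d hd ht)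
      rcases hcol v hv with hv' | ⟨d, hd, hdt⟩
      · rcases hv' with hZ | hW
        · exact hvz1 hZ
        · exact hbad.1 hW
      · rcases hd with hdZ | hdW
        · exact hvz2 d hdZ hdt
        · exact hbad.2 (hdW ▸ hdt)
    · intro v hv hnc hvZ
      exact hncol v hv hnc (Or.inl hvZ)
  obtain ⟨c, hcC, hcZ, hcD, hcw'⟩ := hstep1
  -- Step 2: the reversed directed path `R` from `w` down (up) to `c`.
  obtain ⟨R, hRch, hRhead, hRlast, hRnd, hRmem⟩ := exists_rev_dirpath hdag hcw'
  have hRZ : ∀ v ∈ R, v ∉ Z := by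
    intro v hv hvZ
    rcases hRmem v hv with rfl | ht
    · exact hcZ hvZ
    · exact hcD v hvZ ht
  -- Step 3: the segment `L` of `p` from `c` back to `a`.
  have hcp : c ∈ p := by
    obtain ⟨x, y, hinf, _, _⟩ := hcC
    exact hinf.subset (by simp)
  obtain ⟨P1, P2, hsplit⟩ := List.append_of_mem hcp
  set L : List V := (P1 ++ [c]).reverse with hL
  have hLrev : L.reverse = P1 ++ [c] := by simp [hL]
  have hLpre : L.reverse <+: p := by
    rw [hLrev, hsplit]
    exact ⟨P2, by simp⟩
  have hLlast : L.getLast? = some a := by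
    rw [hL, List.getLast?_reverse, List.head?_append]
    rw [hsplit, List.head?_append] at hhead
    simpa using hhead
  have hLnd : L.Nodup := List.nodup_reverse.1 ((hLpre.sublist).nodup hnd)
  have hLch : L.Chain' (fun x y => E x y ∨ E y x) := by
    have h1 : L.reverse.Chain' (fun x y => E x y ∨ E y x) := hch.prefix hLpre
    exact (List.isChain_reverse.1 h1).imp fun x y hxy => hxy.symm
  have hcL : c ∈ L := by rw [hL, List.mem_reverse]; simp
  -- infix transfer from `L` to `p`
  have hLp : ∀ {x v y : V}, [x, v, y] <:+: L → [y, v, x] <:+: p := by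
    intro x v y hinf
    have h2 : [y, v, x] <:+: L.reverse := by simpa using hinf.reverse
    exact h2.trans hLpre.isInfix
  -- Step 4: split `R` at the first vertex lying on `L`.
  set Pr : V → Bool := fun v => !(decide (v ∈ L)) with hPr
  set R1 := R.takeWhile Pr with hR1
  set R2 := R.dropWhile Pr with hR2
  have hRsplit : R1 ++ R2 = R := List.takeWhile_append_dropWhile ..
  have hR1L : ∀ v ∈ R1, v ∉ L := by
    intro v hv
    have := List.mem_takeWhile_imp hv
    simpa [hPr] using this
  have hR2ne : R2 ≠ [] := by
    intro h0
    have hR1R : R1 = R := by rw [← hRsplit, h0, List.append_nil]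
    have hcR : c ∈ R := by
      have : R ≠ [] := by rintro rfl; simp at hRlast
      have := List.getLast?_eq_getLast (l := R) this ▸ hRlast
      have hgl : R.getLast ‹R ≠ []› = c := by
        rw [List.getLast?_eq_getLast (l := R) ‹R ≠ []›] at hRlast
        exact Option.some_injective _ hRlast
      exact hgl ▸ List.getLast_mem ‹R ≠ []›
    exact hR1L c (hR1R ▸ hcR) hcL
  set s := R2.head hR2ne with hs
  have hsR2 : s ∈ R2 := List.head_mem hR2ne
  have hsR : s ∈ R := by rw [← hRsplit]; exact List.mem_append_right _ hsR2
  have hsL : s ∈ L := by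
    have := List.head_dropWhile_not Pr (l := R) (by rw [← hR2] at *; exact hR2ne)
    have h2 : Pr s = false := by
      rw [hs]
      convert this using 2
    simpa [hPr] using h2
  obtain ⟨M1, M2, hLsplit⟩ := List.append_of_mem hsL
  set q := R1 ++ s :: M2 with hq
  have hRfull : R = (R1 ++ [s]) ++ R2.tail := by
    rw [← hRsplit, ← List.cons_head_tail hR2ne]
    simp [hs]
  have hR1sPre : R1 ++ [s] <+: R := ⟨R2.tail, hRfull.symm⟩
  have hR1Pre : R1 <+: R := ⟨R2, hRsplit⟩
  have hsM2suf : s :: M2 <:+ L := ⟨M1, hLsplit.symm⟩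
  -- q is a path from w to a
  have hqnd : q.Nodup := by
    rw [hq, List.nodup_append]
    refine ⟨(hR1Pre.sublist).nodup hRnd, (hsM2suf.sublist).nodup hLnd, ?_⟩
    intro v hv1 u hv2 hvu
    subst hvu
    exact hR1L v hv1 (hsM2suf.subset hv2)
  have hqch : q.Chain' (fun x y => E x y ∨ E y x) := by
    rw [hq]; show List.IsChain _ _; rw [List.isChain_append]
    refine ⟨(hRch.prefix hR1Pre).imp (fun x y hxy => Or.inr hxy), hLch.suffix hsM2suf, ?_⟩
    intro x hx y hy
    have hych : s = y := by simpa using hy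
    have hchain : (R1 ++ [s]).Chain' (fun x y => E y x) := hRch.prefix hR1sPre
    have hEsx : E s x := (List.isChain_append.1 hchain).2.2 x hx s (by simp)
    exact Or.inr (hych ▸ hEsx)
  have hqhead : q.head? = some w := by
    rcases hR1e : R1 with _ | ⟨r0, R1'⟩
    · have : R2 = R := by rw [← hRsplit, hR1e, List.nil_append]
      rw [hq, hR1e, List.nil_append]
      have hR2head : R2.head? = some w := by rw [‹R2 = R›]; exact hRhead
      rw [List.head?_eq_head hR2ne] at hR2head
      have hsw : s = w := Option.some_injective _ hR2head
      simp [hsw]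
    · rw [hq, List.head?_append_of_ne_nil _ (by simp [hR1e])]
      rw [← hRsplit, List.head?_append_of_ne_nil _ (by simp [hR1e])] at hRhead
      exact hRhead
  have hqlast : q.getLast? = some a := by
    rw [hLsplit, List.getLast?_append] at hLlast
    have hsm : (s :: M2).getLast? = some ((s :: M2).getLast (by simp)) :=
      List.getLast?_eq_getLast (by simp)
    rw [hq, List.getLast?_append, hsm]
    rw [hsm] at hLlast
    simpa using hLlast
  -- activity of q
  have hqact : ActivePath E (Z ∪ {w}) q := by
    apply activePath_of_triples
    case h2 =>
      intro x v y htr hnExy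
      -- v ≠ w in all cases
      have hvw : v ≠ w := by
        intro hvw
        have hpair : [x, v] <:+: q :=
          List.IsInfix.trans (⟨[], [y], rfl⟩ : [x, v] <:+: [x, v, y]) htr
        have hvt : v ∈ q.tail := mem_tail_of_pair_infix hpair
        have hqcons : q = w :: q.tail := by
          cases hqe : q with
          | nil => rw [hqe] at hqhead; simp at hqhead
          | cons z t =>
            rw [hqe] at hqhead
            simp at hqhead
            rw [hqhead]
            simp
        have : w ∉ q.tail := by
          have := hqcons ▸ hqnd
          exact (List.nodup_cons.1 this).1
        exact this (hvw ▸ hvt)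
      rcases infix_append_split (hq ▸ htr) with hA | hB | ⟨l1, l2, hl, hne1, hne2, hsuf, hpre⟩
      · -- triple inside R1 : v ∈ R, not in Z
        have hvR : v ∈ R := hR1Pre.subset (hA.subset (by simp))
        intro hvW
        rcases hvW with hvZ | hvw'
        · exact hRZ v hvR hvZ
        · exact hvw (by simpa using hvw')
      · -- triple inside L : v is an interior non-collider of p
        have hLinf : [x, v, y] <:+: L := hB.trans hsM2suf.isInfix
        have hpinf : [y, v, x] <:+: p := hLp hLinf
        have hnc : ¬ IsColliderOn E p v :=
          not_collider_of_triple hnd hpinf (fun hcon => hnExy ⟨hcon.2, hcon.1⟩)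
        exact hncol v (mem_tail_dropLast_of_triple hpinf) hnc
      · -- straddling case : v ∈ R
        have hcases : (l1 = [x] ∧ l2 = [v, y]) ∨ (l1 = [x, v] ∧ l2 = [y]) := by
          rcases l1 with _ | ⟨z1, l1'⟩
          · exact absurd rfl hne1
          · rcases l1' with _ | ⟨z2, l1''⟩
            · injection hl with h1 h2
              exact Or.inl ⟨by rw [h1], h2.symm⟩
            · rcases l1'' with _ | ⟨z3, l1'''⟩
              · injection hl with h1 hl'
                injection hl' with h2 h3
                exact Or.inr ⟨by rw [h1, h2], h3.symm⟩
              · exfalso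
                injection hl with h1 hl'
                injection hl' with h2 hl''
                injection hl'' with h3 hl'''
                exact hne2 (List.append_eq_nil_iff.1 hl'''.symm).2
        have hvR : v ∈ R := by
          rcases hcases with ⟨hl1, hl2⟩ | ⟨hl1, hl2⟩
          · rw [hl2] at hpre
            rw [List.cons_prefix_cons] at hpre
            exact hpre.1 ▸ hsR
          · rw [hl1] at hsuf
            exact hR1Pre.subset (hsuf.subset (by simp))
        intro hvW
        rcases hvW with hvZ | hvw'
        · exact hRZ v hvR hvZ
        · exact hvw (by simpa using hvw')
    case h1 =>
      intro x v y htr hx hy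
      rcases infix_append_split (hq ▸ htr) with hA | hB | ⟨l1, l2, hl, hne1, hne2, hsuf, hpre⟩
      · -- inside R1 : impossible, edges point down
        exfalso
        have hRtr : [x, v, y] <:+: R := hA.trans hR1Pre.isInfix
        have hchain : List.Chain' (fun x y => E y x) [x, v, y] := hRch.infix hRtr
        have hvx : E v x := (List.isChain_cons_cons.1 hchain).1
        exact cyc_absurd hdag hx hvx
      · -- inside L : collider of p, opened by hact
        have hLinf : [x, v, y] <:+: L := hB.trans hsM2suf.isInfix
        have hpinf : [y, v, x] <:+: p := hLp hLinf
        exact hcol v ⟨y, x, hpinf, hy, hx⟩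
      · -- straddle : impossible
        exfalso
        have hcases : (l1 = [x] ∧ l2 = [v, y]) ∨ (l1 = [x, v] ∧ l2 = [y]) := by
          rcases l1 with _ | ⟨z1, l1'⟩
          · exact absurd rfl hne1
          · rcases l1' with _ | ⟨z2, l1''⟩
            · injection hl with h1 h2
              exact Or.inl ⟨by rw [h1], h2.symm⟩
            · rcases l1'' with _ | ⟨z3, l1'''⟩
              · injection hl with h1 hl'
                injection hl' with h2 h3
                exact Or.inr ⟨by rw [h1, h2], h3.symm⟩
              · exfalso
                injection hl with h1 hl'
                injection hl' with h2 hl''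
                injection hl'' with h3 hl'''
                exact hne2 (List.append_eq_nil_iff.1 hl'''.symm).2
        rcases hcases with ⟨hl1, hl2⟩ | ⟨hl1, hl2⟩
        · -- l1 = [x], v = s : edge E s x exists in R
          rw [hl2] at hpre
          rw [List.cons_prefix_cons] at hpre
          have hvs : v = s := hpre.1
          rw [hl1] at hsuf
          obtain ⟨s0, hs0⟩ := hsuf
          have hinfR : [x, s] <:+: R := by
            refine ⟨s0, R2.tail, ?_⟩
            rw [hRfull, ← hs0]
            simp
          have hchain : List.Chain' (fun x y => E y x) [x, s] := hRch.infix hinfR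
          have hsx : E s x := (List.isChain_cons_cons.1 hchain).1
          exact cyc_absurd hdag (hvs ▸ hx) hsx
        · -- l1 = [x, v] : edge E v x exists in R
          rw [hl1] at hsuf
          obtain ⟨s0, hs0⟩ := hsuf
          have hinfR : [x, v] <:+: R := by
            refine ⟨s0, s :: R2.tail ++ [] , ?_⟩
            rw [hRfull, ← hs0]
            simp
          have hchain : List.Chain' (fun x y => E y x) [x, v] := hRch.infix hinfR
          have hvx : E v x := (List.isChain_cons_cons.1 hchain).1
          exact cyc_absurd hdag hx hvx
  exact ⟨q, ⟨⟨hqnd, hqch⟩, hqhead, hqlast⟩, hqact⟩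


end AuxLemmas

/-- Let `G` be a DAG, `Z` a conditioning set, and `w ∉ Z`.
Suppose a path `p` between vertices `a` and `b` is active with respect to
`Z ∪ {w}` but not with respect to `Z`, so that `w` opens a collider `c` on `p`
(`w = c` or `w` is a descendant of `c`).  Then each of the two segments of `p`
from `c` to its endpoints `a` and `b`, together with the directed path from `c`
down to `w`, makes the endpoint reachable from `w` by a path that is active
with respect to `Z ∪ {w}`; in particular, there are active paths with respect
to `Z ∪ {w}` from `w` to `a` and from `w` to `b`. -/
theorem opened_collider_branches_reachable
    {E : V → V → Prop} (hdag : AcyclicRel E)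
    {Z : Set V} {w a b : V} (hw : w ∉ Z)
    {p : List V} (hp : PathBetween E a b p)
    (hact : ActivePath E (Z ∪ {w}) p) (hnact : ¬ ActivePath E Z p)
    {c : V} (hc : IsColliderOn E p c) (hcw : c = w ∨ Relation.TransGen E c w) :
    (∃ q : List V, PathBetween E w a q ∧ ActivePath E (Z ∪ {w}) q) ∧
    (∃ q : List V, PathBetween E w b q ∧ ActivePath E (Z ∪ {w}) q) := by
  constructor
  · exact aux_branch hdag hw hp hact hnact
  · refine aux_branch hdag hw (pathBetween_reverse hp) (activePath_reverse hact) ?_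
    intro hr
    apply hnact
    have := activePath_reverse hr
    rwa [List.reverse_reverse] at this
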